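/- Let u₁,...,u_r be independent random variables in Z_p defined by u_i = round(α·v_i/q) mod p, where α is uniform in (Z_{pq})^* and v_i are i.i.d. uniform in {(1−q)/2, ..., (q−1)/2}, with p ≥ q primes. For any nonzero S ∈ (Z_p)^r, Pr[⟨S,u⟩ = 0 mod p] ≤ C·(1/q + 1/p) for an absolute constant C. -/

import Mathlib

open Finset

lemma bmod_bound' (q : ℕ) (hq : Odd q) (n : ℤ) : 2 * |Int.bmod n q| < q := by
  rcases hq with ⟨s, rfl⟩
  have h0 : (0:ℤ) < ((2*s+1 : ℕ):ℤ) := by positivity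
  have h1 := Int.emod_nonneg n h0.ne'
  have h2 := Int.emod_lt_of_pos n h0
  rw [Int.bmod_def]
  push_cast at h1 h2 ⊢
  split
  · rw [abs_of_nonneg (by omega)]; omega
  · rw [abs_of_nonpos (by omega)]; omega

lemma bmod_dvd' (q : ℕ) (n : ℤ) : (q:ℤ) ∣ n - Int.bmod n q := by
  rw [Int.bmod_def, Int.emod_def]
  split
  · exact ⟨n / q, by ring⟩
  · exact ⟨n / q + 1, by ring⟩

lemma round_eq_bmod (q : ℕ) (hq : Odd q) (hq0 : 0 < q) (n : ℤ) :
    (q:ℤ) * round ((n : ℚ) / (q : ℚ)) = n - Int.bmod n q := by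
  obtain ⟨k, hk⟩ := bmod_dvd' q n
  have hb := bmod_bound' q hq n
  have hqQ : (0:ℚ) < (q:ℚ) := by exact_mod_cast hq0
  have hn : (n:ℚ) = q * k + Int.bmod n q := by
    have : (n:ℚ) - Int.bmod n q = q * k := by exact_mod_cast hk
    linarith
  have hsplit : (n:ℚ) / q = k + (Int.bmod n q : ℚ) / q := by
    field_simp [hn]; linarith [hn]
  rw [hsplit]
  have habs : |(Int.bmod n q : ℚ) / q| < 1/2 := by
    rw [abs_div, abs_of_pos hqQ, div_lt_iff₀ hqQ]
    have h2 : (2:ℚ) * |(Int.bmod n q : ℚ)| < q := by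
      have : ((2 * |Int.bmod n q| : ℤ) : ℚ) < ((q:ℕ):ℚ) := by exact_mod_cast hb
      push_cast at this
      exact this
    linarith
  have hr0 : round ((Int.bmod n q : ℚ) / q) = 0 := by
    rw [round_eq]
    rw [Int.floor_eq_zero_iff.mpr (by
      constructor
      · rcases abs_lt.mp habs with ⟨h, _⟩; simpa using by linarith
      · rcases abs_lt.mp habs with ⟨_, h⟩; simpa using by linarith)]
  rw [round_intCast_add, hr0, add_zero, hk]

lemma round_sub_round (q : ℕ) (hq : Odd q) (hq0 : 0 < q) (n m : ℤ) (h : (q:ℤ) ∣ n - m) :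
    (q:ℤ) * (round ((n : ℚ) / (q : ℚ)) - round ((m : ℚ) / (q : ℚ))) = n - m := by
  have hbm : Int.bmod n q = Int.bmod m q := by
    have hmod : n % (q:ℤ) = m % (q:ℤ) := Int.ModEq.symm (Int.modEq_iff_dvd.mpr (by
      have := h; omega))
    rw [Int.bmod_def, Int.bmod_def, hmod]
  have h1 := round_eq_bmod q hq hq0 n
  have h2 := round_eq_bmod q hq hq0 m
  rw [mul_sub, h1, h2, hbm]; ring

theorem stmt16 :
    ∃ C : ℝ, 0 < C ∧
      ∀ (p q r : ℕ) [NeZero p] [NeZero (p * q)],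
        p.Prime → q.Prime → Odd p → Odd q → q ≤ p → 0 < r →
        ∀ S : Fin r → ZMod p, S ≠ 0 →
        ((((Finset.univ : Finset (ZMod (p * q))ˣ) ×ˢ Fintype.piFinset fun _ : Fin r =>
              Finset.Icc ((1 - (q : ℤ)) / 2) (((q : ℤ) - 1) / 2)).filter
            (fun αv : (ZMod (p * q))ˣ × (Fin r → ℤ) =>
              (∑ i, S i *
                ((round ((((αv.1 : ZMod (p * q)).val : ℚ) * (αv.2 i : ℚ)) / (q : ℚ))
                  : ℤ) : ZMod p)) = 0)).card : ℝ) /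
          (((Finset.univ : Finset (ZMod (p * q))ˣ) ×ˢ Fintype.piFinset fun _ : Fin r =>
              Finset.Icc ((1 - (q : ℤ)) / 2) (((q : ℤ) - 1) / 2)).card : ℝ)
          ≤ C * (1 / (q : ℝ) + 1 / (p : ℝ)) := by
  classical
  refine ⟨3, by norm_num, ?_⟩
  intro p q r _ _ hp hq hpodd hqodd hqp hr S hS
  haveI : Fact p.Prime := ⟨hp⟩
  obtain ⟨s, hs⟩ := hqodd
  have hq3 : 3 ≤ q := by have := hq.two_le; omega
  have hp3 : 3 ≤ p := le_trans hq3 hqp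
  have hq0 : 0 < q := by omega
  set lo : ℤ := (1 - (q:ℤ)) / 2 with hlo
  set hi : ℤ := ((q:ℤ) - 1) / 2 with hhi
  have hloval : lo = -(s:ℤ) := by rw [hlo]; subst hs; push_cast; omega
  have hhival : hi = (s:ℤ) := by rw [hhi]; subst hs; push_cast; omega
  set V := Fintype.piFinset fun _ : Fin r => Finset.Icc lo hi with hV
  have hIccCard : (Finset.Icc lo hi).card = q := by
    rw [Int.card_Icc, hloval, hhival]; omega
  have hVcard : V.card = q ^ r := by
    rw [hV, Fintype.card_piFinset]; simp [hIccCard]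
  set T := Nat.totient (p * q) with hT
  have hTcard : (Finset.univ : Finset (ZMod (p * q))ˣ).card = T := by
    rw [Finset.card_univ, ZMod.card_units_eq_totient]
  set P := (Finset.univ : Finset (ZMod (p * q))ˣ) ×ˢ V with hP
  have hPcard : P.card = T * q ^ r := by
    rw [hP, Finset.card_product, hTcard, hVcard]
  set pred : (ZMod (p * q))ˣ × (Fin r → ℤ) → Prop := fun αv =>
    (∑ i, S i * ((round ((((αv.1 : ZMod (p * q)).val : ℚ) * (αv.2 i : ℚ)) / (q : ℚ))
      : ℤ) : ZMod p)) = 0 with hpred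
  set A : (Fin r → ℤ) → Prop := fun v => (∑ i, S i * ((v i : ℤ) : ZMod p)) = 0 with hA
  -- split
  have hsplit : (P.filter pred).card ≤
      (P.filter (fun x => A x.2)).card + (P.filter (fun x => pred x ∧ ¬ A x.2)).card := by
    refine le_trans (Finset.card_le_card ?_) (Finset.card_union_le _ _)
    intro x hx
    rw [Finset.mem_filter] at hx
    by_cases h : A x.2 <;> simp only [Finset.mem_union, Finset.mem_filter] <;> tauto
  -- first bound
  obtain ⟨i₀, hi₀⟩ : ∃ i, S i ≠ 0 := Function.ne_iff.mp hS
  have hcancel : ∀ x y : ℤ, lo ≤ x → x ≤ hi → lo ≤ y → y ≤ hi →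
      ((x : ZMod p) = (y : ZMod p)) → x = y := by
    intro x y h1 h2 h3 h4 hxy
    have hdvd : (p:ℤ) ∣ y - x :=
      ((ZMod.intCast_eq_intCast_iff x y p).mp hxy).dvd
    have hlt : |y - x| < (p:ℤ) := by
      rw [hloval] at h1 h3; rw [hhival] at h2 h4
      have : 2 * (s:ℤ) < (p:ℤ) := by
        have : q ≤ p := hqp
        have hc : ((q:ℕ):ℤ) ≤ ((p:ℕ):ℤ) := by exact_mod_cast hqp
        omega
      rw [abs_lt]; omega
    by_contra hne
    have h0 : y - x ≠ 0 := by omega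
    have := Int.le_of_dvd (abs_pos.mpr h0) ((dvd_abs _ _).mpr hdvd)
    omega
  have hVmem : ∀ v ∈ V, ∀ i, lo ≤ v i ∧ v i ≤ hi := by
    intro v hv i
    rw [hV, Fintype.mem_piFinset] at hv
    have := hv i
    rw [Finset.mem_Icc] at this
    exact this
  have hN1 : (P.filter (fun x => A x.2)).card ≤ T * q ^ (r - 1) := by
    have hfp : P.filter (fun x => A x.2) = Finset.univ ×ˢ (V.filter A) := by
      ext ⟨α, v⟩
      simp only [Finset.mem_filter, Finset.mem_product, Finset.mem_univ, true_and, hP]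
    rw [hfp, Finset.card_product, hTcard]
    refine Nat.mul_le_mul_left T ?_
    -- injection into piFinset with i₀ coordinate pinned to 0
    have hmaps : ∀ v ∈ V.filter A, Function.update v i₀ 0 ∈
        Fintype.piFinset (fun j => if j = i₀ then ({0} : Finset ℤ) else Finset.Icc lo hi) := by
      intro v hv
      rw [Finset.mem_filter] at hv
      rw [Fintype.mem_piFinset]
      intro j
      by_cases hj : j = i₀
      · subst hj; simp [Function.update_self]
      · rw [Function.update_of_ne hj, if_neg hj]
        rw [hV, Fintype.mem_piFinset] at hv
        exact hv.1 j
    have hinj : Set.InjOn (fun v => Function.update v i₀ 0) ((V.filter A : Finset (Fin r → ℤ)) : Set (Fin r → ℤ)) := by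
      intro v hv v' hv' heq
      simp only [Finset.coe_filter, Set.mem_setOf_eq] at hv hv'
      have hoff : ∀ j, j ≠ i₀ → v j = v' j := by
        intro j hj
        have := congrFun heq j
        simpa [Function.update_of_ne hj] using this
      have hsum : S i₀ * ((v i₀ : ℤ) : ZMod p) = S i₀ * ((v' i₀ : ℤ) : ZMod p) := by
        have h1 : ∑ i, S i * ((v i : ℤ) : ZMod p) = ∑ i, S i * ((v' i : ℤ) : ZMod p) := by
          rw [hv.2, hv'.2]
        rw [← Finset.sum_erase_add _ _ (Finset.mem_univ i₀),
            ← Finset.sum_erase_add _ _ (Finset.mem_univ i₀)] at h1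
        have h2 : ∑ j ∈ Finset.univ.erase i₀, S j * ((v j : ℤ) : ZMod p)
            = ∑ j ∈ Finset.univ.erase i₀, S j * ((v' j : ℤ) : ZMod p) := by
          refine Finset.sum_congr rfl ?_
          intro j hj
          rw [hoff j (Finset.ne_of_mem_erase hj)]
        rw [h2] at h1
        exact add_left_cancel h1
      have hci : ((v i₀ : ℤ) : ZMod p) = ((v' i₀ : ℤ) : ZMod p) :=
        mul_left_cancel₀ hi₀ hsum
      have hb := hVmem v hv.1 i₀
      have hb' := hVmem v' hv'.1 i₀
      have hvv : v i₀ = v' i₀ := hcancel _ _ hb.1 hb.2 hb'.1 hb'.2 hci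
      funext j
      by_cases hj : j = i₀
      · subst hj; exact hvv
      · exact hoff j hj
    refine le_trans (Finset.card_le_card_of_injOn _ hmaps hinj) ?_
    rw [Fintype.card_piFinset]
    have : ∀ j : Fin r, (if j = i₀ then ({0} : Finset ℤ) else Finset.Icc lo hi).card
        = if j = i₀ then 1 else q := by
      intro j; split <;> simp [hIccCard]
    rw [Finset.prod_congr rfl (fun j _ => this j)]
    rw [← Finset.prod_erase_mul _ _ (Finset.mem_univ i₀), if_pos rfl, mul_one]
    rw [Finset.prod_congr rfl (fun j hj => if_neg (Finset.ne_of_mem_erase hj)),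
        Finset.prod_const, Finset.card_erase_of_mem (Finset.mem_univ i₀), Finset.card_univ,
        Fintype.card_fin]
  -- second bound
  have hN2 : (P.filter (fun x => pred x ∧ ¬ A x.2)).card ≤ q * q ^ r := by
    have hmaps : ∀ x ∈ P.filter (fun x => pred x ∧ ¬ A x.2),
        (((x.1 : ZMod (p*q)).val % q, x.2)) ∈ (Finset.range q) ×ˢ V := by
      intro x hx
      rw [Finset.mem_filter, hP, Finset.mem_product] at hx
      rw [Finset.mem_product, Finset.mem_range]
      exact ⟨Nat.mod_lt _ hq0, hx.1.2⟩
    have hinj : Set.InjOn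
        (fun x : (ZMod (p*q))ˣ × (Fin r → ℤ) => ((x.1 : ZMod (p*q)).val % q, x.2))
        ((P.filter (fun x => pred x ∧ ¬ A x.2) : Finset ((ZMod (p*q))ˣ × (Fin r → ℤ))) :
          Set ((ZMod (p*q))ˣ × (Fin r → ℤ))) := by
      intro x hx y hy heq
      simp only [Finset.coe_filter, Set.mem_setOf_eq] at hx hy
      obtain ⟨hxP, hxpred, hxA⟩ := hx
      obtain ⟨hyP, hypred, _⟩ := hy
      have hv : x.2 = y.2 := (Prod.ext_iff.mp heq).2
      have hmodN : (x.1 : ZMod (p*q)).val % q = (y.1 : ZMod (p*q)).val % q :=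
        (Prod.ext_iff.mp heq).1
      have hmod : (((x.1 : ZMod (p*q)).val : ℤ)) % (q:ℤ) = (((y.1 : ZMod (p*q)).val : ℤ)) % (q:ℤ) := by
        exact_mod_cast congrArg (Nat.cast : ℕ → ℤ) hmodN
      have hd : (q:ℤ) ∣ ((x.1 : ZMod (p*q)).val : ℤ) - ((y.1 : ZMod (p*q)).val : ℤ) := by
        have h1 : ((x.1 : ZMod (p*q)).val : ℤ) ≡ ((y.1 : ZMod (p*q)).val : ℤ) [ZMOD (q:ℤ)] := hmod
        exact dvd_sub_comm.mp (Int.ModEq.dvd h1)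
      obtain ⟨e, he⟩ := hd
      have hqne : ((q:ℕ):ℤ) ≠ 0 := by exact_mod_cast hq0.ne'
      have hkey : ∀ i : Fin r,
          round (((((x.1 : ZMod (p*q)).val : ℤ) * x.2 i : ℤ) : ℚ) / q) -
            round (((((y.1 : ZMod (p*q)).val : ℤ) * x.2 i : ℤ) : ℚ) / q) = e * x.2 i := by
        intro i
        have hdd : (q:ℤ) ∣ (((x.1 : ZMod (p*q)).val : ℤ) * x.2 i) -
            (((y.1 : ZMod (p*q)).val : ℤ) * x.2 i) := ⟨e * x.2 i, by rw [← sub_mul, he]; ring⟩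
        have h2 := round_sub_round q ⟨s, hs⟩ hq0 _ _ hdd
        have h3 : (((x.1 : ZMod (p*q)).val : ℤ) * x.2 i) -
            (((y.1 : ZMod (p*q)).val : ℤ) * x.2 i) = (q:ℤ) * (e * x.2 i) := by
          rw [← sub_mul, he]; ring
        rw [h3] at h2
        exact mul_left_cancel₀ hqne h2
      -- translate the two predicates
      have hconv : ∀ (u : (ZMod (p*q))ˣ) (i : Fin r),
          (((u : ZMod (p*q)).val : ℚ)) * (x.2 i : ℚ) / (q:ℚ)
            = ((((u : ZMod (p*q)).val : ℤ) * x.2 i : ℤ) : ℚ) / (q:ℚ) := by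
        intro u i; push_cast; ring
      rw [hpred] at hxpred hypred
      simp only [← hv, hconv] at hxpred hypred
      have hzero : (e : ZMod p) * (∑ i, S i * ((x.2 i : ℤ) : ZMod p)) = 0 := by
        have c1 : (e : ZMod p) * (∑ i, S i * ((x.2 i : ℤ) : ZMod p))
            = ∑ i, S i * (((e * x.2 i : ℤ)) : ZMod p) := by
          rw [Finset.mul_sum]
          refine Finset.sum_congr rfl ?_
          intro i _; push_cast; ring
        have c2 : ∑ i, S i * (((e * x.2 i : ℤ)) : ZMod p)
            = (∑ i, S i * ((round (((((x.1 : ZMod (p*q)).val : ℤ) * x.2 i : ℤ) : ℚ) / q) : ℤ) : ZMod p))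
              - ∑ i, S i * ((round (((((y.1 : ZMod (p*q)).val : ℤ) * x.2 i : ℤ) : ℚ) / q) : ℤ) : ZMod p) := by
          rw [← Finset.sum_sub_distrib]
          refine Finset.sum_congr rfl ?_
          intro i _
          rw [← hkey i]
          push_cast
          ring
        rw [c1, c2, hxpred, hypred, sub_zero]
      have hE : (e : ZMod p) = 0 := by
        rcases mul_eq_zero.mp hzero with h | h
        · exact h
        · exact absurd h hxA
      have hpe : (p:ℤ) ∣ e := (ZMod.intCast_zmod_eq_zero_iff_dvd e p).mp hE
      obtain ⟨c, hc⟩ := hpe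
      have hdall : ((x.1 : ZMod (p*q)).val : ℤ) - ((y.1 : ZMod (p*q)).val : ℤ)
          = ((p*q : ℕ) : ℤ) * c := by
        rw [he, hc]; push_cast; ring
      have hvx : (x.1 : ZMod (p*q)).val < p * q := ZMod.val_lt _
      have hvy : (y.1 : ZMod (p*q)).val < p * q := ZMod.val_lt _
      have hc0 : c = 0 := by
        by_contra hc0
        have habs : ((p*q:ℕ):ℤ) ≤ |((x.1 : ZMod (p*q)).val : ℤ) - ((y.1 : ZMod (p*q)).val : ℤ)| := by
          refine Int.le_of_dvd (abs_pos.mpr ?_) ((dvd_abs _ _).mpr ⟨c, hdall⟩)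
          rw [hdall]
          exact mul_ne_zero (by have h5 : 0 < p*q := lt_of_le_of_lt (Nat.zero_le _) hvx; exact_mod_cast h5.ne') hc0
        have hx1 : ((x.1 : ZMod (p*q)).val : ℤ) < ((p*q:ℕ):ℤ) := by exact_mod_cast hvx
        have hy1 : ((y.1 : ZMod (p*q)).val : ℤ) < ((p*q:ℕ):ℤ) := by exact_mod_cast hvy
        have hx0 : (0:ℤ) ≤ ((x.1 : ZMod (p*q)).val : ℤ) := Int.ofNat_nonneg _
        have hy0 : (0:ℤ) ≤ ((y.1 : ZMod (p*q)).val : ℤ) := Int.ofNat_nonneg _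
        rcases abs_cases (((x.1 : ZMod (p*q)).val : ℤ) - ((y.1 : ZMod (p*q)).val : ℤ)) with ⟨h,_⟩|⟨h,_⟩ <;> omega
      have hval : (x.1 : ZMod (p*q)).val = (y.1 : ZMod (p*q)).val := by
        have := hdall
        rw [hc0, mul_zero, sub_eq_zero] at this
        exact_mod_cast this
      have hu : (x.1 : ZMod (p*q)) = (y.1 : ZMod (p*q)) := ZMod.val_injective _ hval
      exact Prod.ext (Units.ext hu) hv
    have := Finset.card_le_card_of_injOn _ hmaps hinj
    calc (P.filter (fun x => pred x ∧ ¬ A x.2)).card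
        ≤ ((Finset.range q) ×ˢ V).card := this
      _ = q * q ^ r := by rw [Finset.card_product, Finset.card_range, hVcard]
  -- final arithmetic
  have hN : (P.filter pred).card ≤ T * q ^ (r - 1) + q * q ^ r :=
    le_trans hsplit (Nat.add_le_add hN1 hN2)
  obtain ⟨r', rfl⟩ : ∃ r', r = r' + 1 := ⟨r - 1, by omega⟩
  have hrr : r' + 1 - 1 = r' := rfl
  rw [hrr] at hN
  have hTlb : (p - 1) * (q - 1) ≤ T := by
    by_cases hpq : p = q
    · subst hpq
      have : T = p ^ (2 - 1) * (p - 1) := by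
        rw [hT, ← pow_two]
        exact Nat.totient_prime_pow hp (by norm_num)
      rw [this, pow_one]
      exact Nat.mul_le_mul_right _ (Nat.sub_le p 1)
    · have hcop : Nat.Coprime p q := (Nat.coprime_primes hp hq).mpr hpq
      rw [hT, Nat.totient_mul hcop, Nat.totient_prime hp, Nat.totient_prime hq]
  have h1 : q * p ≤ 3 * T := by
    obtain ⟨p2, hp2⟩ : ∃ p2, p = p2 + 3 := ⟨p - 3, by omega⟩
    obtain ⟨q2, hq2⟩ : ∃ q2, q = q2 + 3 := ⟨q - 3, by omega⟩
    have hTlb' : (p2 + 2) * (q2 + 2) ≤ T := by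
      have : p - 1 = p2 + 2 := by omega
      have h' : q - 1 = q2 + 2 := by omega
      rw [this, h'] at hTlb
      exact hTlb
    subst hp2; subst hq2
    nlinarith [hTlb']
  set X := q ^ r' with hX
  have keyNat : (P.filter pred).card * (p * q) ≤ 3 * (p + q) * (T * q ^ (r' + 1)) := by
    have hNX : (P.filter pred).card ≤ T * X + X * q * q := by
      have : q * q ^ (r' + 1) = X * q * q := by rw [hX]; ring
      rw [this] at hN
      exact hN
    calc (P.filter pred).card * (p * q)
        ≤ (T * X + X * q * q) * (p * q) := Nat.mul_le_mul_right _ hNX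
      _ = p * (T * X * q) + (q * p) * (X * q * q) := by ring
      _ ≤ 3 * p * (T * X * q) + (3 * T) * (X * q * q) :=
          Nat.add_le_add (Nat.mul_le_mul_right _ (by omega : p ≤ 3 * p)) (Nat.mul_le_mul_right _ h1)
      _ = 3 * (p + q) * (T * q ^ (r' + 1)) := by rw [hX]; ring
  have hp0R : (0:ℝ) < (p:ℝ) := by
    have : 0 < p := by omega
    exact_mod_cast this
  have hq0R : (0:ℝ) < (q:ℝ) := by exact_mod_cast hq0
  have hTpos : 0 < T := by
    rw [hT]
    exact Nat.totient_pos.mpr (Nat.mul_pos (by omega) hq0)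
  have hPpos : (0:ℝ) < (P.card : ℝ) := by
    rw [hPcard]
    have : 0 < T * q ^ (r' + 1) := Nat.mul_pos hTpos (pow_pos hq0 _)
    exact_mod_cast this
  have hkeyR : ((P.filter pred).card : ℝ) * ((p:ℝ) * (q:ℝ)) ≤
      3 * ((p:ℝ) + (q:ℝ)) * ((P.card : ℝ)) := by
    rw [hPcard]
    exact_mod_cast keyNat
  have hCeq : (3:ℝ) * (1 / (q:ℝ) + 1 / (p:ℝ)) = 3 * ((p:ℝ) + (q:ℝ)) / ((p:ℝ) * (q:ℝ)) := by
    field_simp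
  rw [hCeq, div_le_div_iff₀ hPpos (by positivity)]
  calc ((P.filter pred).card : ℝ) * ((p:ℝ) * (q:ℝ)) ≤ 3 * ((p:ℝ) + (q:ℝ)) * ((P.card : ℝ)) := hkeyR
    _ = 3 * ((p:ℝ) + (q:ℝ)) * (P.card : ℝ) := rfl
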